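/- For all natural numbers k and l, the following identity holds: Σ_{j=0}^{l+1} [l+1 choose j]_q (-1)^{j+1} [k+j+1]_q a*_{k+j} q^{j(j-1)/2 - l(k+j) - k} = Σ_{j=0}^{k+1} [k+1 choose j]_q (-1)^j [l+j+1]_q a_{l+j} q^{(j-1)(j-2)/2}. -/

import Mathlib

open Finset

/-- The q-Pochhammer symbol `(a;q)_n = ∏_{j=0}^{n-1} (1 - a q^j)`. -/
def qPoch {F : Type*} [Field F] (q a : F) (n : ℕ) : F :=
  ∏ j ∈ Finset.range n, (1 - a * q ^ j)

/-- The q-binomial coefficient `[n choose i]_q`, equal to 0 when `i > n`. -/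
def qBinom {F : Type*} [Field F] (q : F) (n i : ℕ) : F :=
  if i ≤ n then qPoch q q n / (qPoch q q i * qPoch q q (n - i)) else 0

/-- The q-integer `[n]_q = (1-q^n)/(1-q)`. -/
def qInt {F : Type*} [Field F] (q : F) (n : ℕ) : F := (1 - q ^ n) / (1 - q)

/-- The q-dual sequence `a*_n = ∑_{i=0}^n (-1)^i [n choose i]_q q^{i(i-1)/2} a_i`. -/
def qDual {F : Type*} [Field F] (q : F) (a : ℕ → F) (n : ℕ) : F :=
  ∑ i ∈ Finset.range (n + 1), (-1 : F) ^ i * qBinom q n i * q ^ (i.choose 2) * a i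

section Aux

variable {F : Type*} [Field F] {q : F}


lemma one_sub_qpow_ne (hq : ∀ m : ℕ, 0 < m → q ^ m ≠ 1) {m : ℕ} (hm : 0 < m) :
    (1 : F) - q ^ m ≠ 0 := by
  intro h
  exact hq m hm (by linear_combination -h)

lemma qPoch_ne_zero (hq : ∀ m : ℕ, 0 < m → q ^ m ≠ 1) (n : ℕ) : qPoch q q n ≠ 0 := by
  unfold qPoch
  refine Finset.prod_ne_zero_iff.2 fun j _ => ?_
  have : q * q ^ j = q ^ (j + 1) := by ring
  rw [this]
  exact one_sub_qpow_ne hq (Nat.succ_pos j)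

lemma qPoch_succ (n : ℕ) : qPoch q q (n+1) = qPoch q q n * (1 - q ^ (n+1)) := by
  unfold qPoch
  rw [Finset.prod_range_succ]
  ring

lemma qPoch_zero : qPoch q (q:F) 0 = 1 := by simp [qPoch]

lemma qBinom_zero (hq : ∀ m : ℕ, 0 < m → q ^ m ≠ 1) (n : ℕ) : qBinom q n 0 = 1 := by
  rw [qBinom, if_pos (Nat.zero_le n), Nat.sub_zero, qPoch_zero, one_mul]
  exact div_self (qPoch_ne_zero hq n)

lemma qBinom_self (hq : ∀ m : ℕ, 0 < m → q ^ m ≠ 1) (n : ℕ) : qBinom q n n = 1 := by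
  rw [qBinom, if_pos le_rfl, Nat.sub_self, qPoch_zero, mul_one]
  exact div_self (qPoch_ne_zero hq n)

lemma qBinom_of_lt {n i : ℕ} (h : n < i) : qBinom q n i = 0 := by
  rw [qBinom, if_neg (by omega)]

lemma qInt_ne_zero (hq : ∀ m : ℕ, 0 < m → q ^ m ≠ 1) {n : ℕ} (hn : 0 < n) :
    qInt q n ≠ 0 := by
  have h1 : (1:F) - q ≠ 0 := by simpa using one_sub_qpow_ne hq one_pos
  exact div_ne_zero (one_sub_qpow_ne hq hn) h1

lemma pascal_nat (hq : ∀ m : ℕ, 0 < m → q ^ m ≠ 1) (i d : ℕ) :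
    qBinom q (i+1+d+1) (i+1) = qBinom q (i+1+d) (i+1) + q^(d+1) * qBinom q (i+1+d) i := by
  rw [qBinom, qBinom, qBinom, if_pos (by omega), if_pos (by omega), if_pos (by omega)]
  rw [show i+1+d+1-(i+1) = d+1 from by omega, show i+1+d-(i+1) = d from by omega,
      show i+1+d-i = d+1 from by omega]
  rw [show i+1+d+1 = (i+1+d)+1 from rfl, qPoch_succ (i+1+d), qPoch_succ i, qPoch_succ d]
  have h1 := qPoch_ne_zero hq i
  have h2 := qPoch_ne_zero hq d
  have h3 : (1:F) - q^(i+1) ≠ 0 := one_sub_qpow_ne hq (by omega)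
  have h4 : (1:F) - q^(d+1) ≠ 0 := one_sub_qpow_ne hq (by omega)
  field_simp
  ring

def qBinomZ (q : F) (n : ℕ) (i : ℤ) : F := if 0 ≤ i then qBinom q n i.toNat else 0

lemma qBinomZ_coe (n i : ℕ) : qBinomZ q n (i : ℤ) = qBinom q n i := by
  rw [qBinomZ, if_pos (Int.natCast_nonneg i), Int.toNat_natCast]

lemma qBinomZ_neg {n : ℕ} {i : ℤ} (h : i < 0) : qBinomZ q n i = 0 := by
  rw [qBinomZ, if_neg (by omega)]

lemma pascalZ (hq : ∀ m : ℕ, 0 < m → q ^ m ≠ 1) (n : ℕ) (i : ℤ) :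
    qBinomZ q (n+1) i = qBinomZ q n i + q ^ ((n:ℤ)+1-i) * qBinomZ q n (i-1) := by
  rcases lt_or_ge i 0 with h | h
  · rw [qBinomZ_neg h, qBinomZ_neg h, qBinomZ_neg (by omega), mul_zero, add_zero]
  lift i to ℕ using h
  cases i with
  | zero =>
    rw [show ((0:ℕ):ℤ) - 1 = -1 from rfl, qBinomZ_coe, qBinomZ_coe,
        qBinomZ_neg (show (-1:ℤ) < 0 by norm_num), mul_zero, add_zero,
        qBinom_zero hq, qBinom_zero hq]
  | succ i₀ =>
    rw [show ((i₀+1 : ℕ) : ℤ) - 1 = (i₀ : ℤ) from by push_cast; ring,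
        qBinomZ_coe, qBinomZ_coe, qBinomZ_coe]
    rcases lt_trichotomy (i₀+1) (n+1) with hc | hc | hc
    · obtain ⟨d, rfl⟩ : ∃ d, n = i₀ + 1 + d := ⟨n - (i₀+1), by omega⟩
      rw [show ((i₀+1+d : ℕ):ℤ) + 1 - ((i₀+1:ℕ):ℤ) = ((d+1 : ℕ) : ℤ) from by push_cast; ring,
          zpow_natCast]
      exact pascal_nat hq i₀ d
    · obtain rfl : i₀ = n := by omega
      rw [qBinom_self hq, qBinom_of_lt (by omega), qBinom_self hq,
          show ((i₀:ℕ):ℤ) + 1 - ((i₀+1:ℕ):ℤ) = 0 from by push_cast; ring, zpow_zero]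
      ring
    · rw [qBinom_of_lt (by omega), qBinom_of_lt (by omega), qBinom_of_lt (by omega)]
      ring

lemma qIntBinom (hq : ∀ m : ℕ, 0 < m → q ^ m ≠ 1) (N m : ℕ) :
    qInt q (N+1) * qBinom q N m = qInt q (m+1) * qBinom q (N+1) (m+1) := by
  rcases le_or_gt m N with h | h
  · obtain ⟨d, rfl⟩ : ∃ d, N = m + d := ⟨N - m, by omega⟩
    rw [qBinom, qBinom, if_pos (by omega), if_pos (by omega),
        show m+d-m = d from by omega, show m+d+1-(m+1) = d from by omega,
        qInt, qInt, qPoch_succ (m+d), qPoch_succ m]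
    have h1 := qPoch_ne_zero hq m
    have h2 := qPoch_ne_zero hq d
    have h3 := qPoch_ne_zero hq (m+d)
    have h4 : (1:F) - q^(m+1) ≠ 0 := one_sub_qpow_ne hq (by omega)
    have h5 : (1:F) - q ≠ 0 := by simpa using one_sub_qpow_ne hq one_pos
    field_simp
  · rw [qBinom_of_lt h, qBinom_of_lt (by omega), mul_zero, mul_zero]

lemma choose_two_succ (j : ℕ) : (j+1).choose 2 = j.choose 2 + j := by
  rw [Nat.choose_succ_succ, Nat.choose_one_right]; exact Nat.add_comm _ _

def S (q : F) (n k : ℕ) (m : ℤ) : F :=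
  ∑ j ∈ Finset.range (n+1), (-1:F)^j * q^((j.choose 2:ℤ) - ((n:ℤ)-1)*(j:ℤ)) *
    qBinom q n j * qBinomZ q (k+j+1) (m+1)

lemma S_succ (hq0 : q ≠ 0) (hq : ∀ m : ℕ, 0 < m → q ^ m ≠ 1) (n k : ℕ) (m : ℤ) :
    S q (n+1) k m = -q^((k:ℤ)+1-m) * S q n k (m-1) := by
  unfold S
  have hsplit : ∀ j ∈ Finset.range (n+2),
      (-1:F)^j * q^((j.choose 2:ℤ) - (((n+1:ℕ):ℤ)-1)*(j:ℤ)) * qBinom q (n+1) j *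
        qBinomZ q (k+j+1) (m+1)
      = (-1:F)^j * q^((j.choose 2:ℤ) - ((n:ℤ))*(j:ℤ)) * qBinomZ q n j *
          qBinomZ q (k+j+1) (m+1)
        + (-1:F)^j * q^((j.choose 2:ℤ) - ((n:ℤ))*(j:ℤ)) *
          (q ^ ((n:ℤ)+1-(j:ℤ)) * qBinomZ q n ((j:ℤ)-1)) * qBinomZ q (k+j+1) (m+1) := by
    intro j _
    rw [← qBinomZ_coe (n+1) j, pascalZ hq n (j:ℤ),
        show (((n+1:ℕ):ℤ)-1)*(j:ℤ) = ((n:ℤ))*(j:ℤ) from by push_cast; ring]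
    ring
  rw [Finset.sum_congr rfl hsplit, Finset.sum_add_distrib]
  rw [Finset.sum_range_succ (fun j => (-1:F)^j * q^((j.choose 2:ℤ) - ((n:ℤ))*(j:ℤ)) *
        qBinomZ q n j * qBinomZ q (k+j+1) (m+1)) (n+1)]
  rw [qBinomZ_coe n (n+1), qBinom_of_lt (Nat.lt_succ_self n), mul_zero, zero_mul, add_zero]
  rw [Finset.sum_range_succ' (fun j => (-1:F)^j * q^((j.choose 2:ℤ) - ((n:ℤ))*(j:ℤ)) *
        (q ^ ((n:ℤ)+1-(j:ℤ)) * qBinomZ q n ((j:ℤ)-1)) * qBinomZ q (k+j+1) (m+1)) (n+1)]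
  rw [show ((0:ℕ):ℤ) - 1 = -1 from rfl, qBinomZ_neg (show (-1:ℤ) < 0 by norm_num),
      mul_zero, mul_zero, zero_mul, add_zero]
  rw [← Finset.sum_add_distrib, Finset.mul_sum]
  refine Finset.sum_congr rfl fun j hj => ?_
  rw [show ((j+1:ℕ):ℤ) - 1 = (j:ℤ) from by push_cast; ring, qBinomZ_coe,
      show k+(j+1)+1 = (k+j+1)+1 from by omega, pascalZ hq (k+j+1) (m+1),
      show m - 1 + 1 = m from by ring,
      show (((j+1:ℕ)).choose 2 : ℤ) = (j.choose 2 : ℤ) + (j:ℤ) from by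
        rw [choose_two_succ]; push_cast; ring]
  push_cast
  have hm : q ^ (m : ℤ) ≠ 0 := zpow_ne_zero m hq0
  simp only [mul_add, add_mul, mul_sub, sub_mul, mul_one, one_mul, zpow_sub₀ hq0,
    zpow_add₀ hq0, zpow_mul, zpow_natCast, zpow_one, mul_zpow, div_zpow, zpow_zero]
  field_simp
  rw [show m + 1 - 1 = m from by ring]
  have h1 : (q^n : F) ≠ 0 := pow_ne_zero _ hq0
  have h2 : ((q^n)^j : F) ≠ 0 := pow_ne_zero _ h1
  have h3 : (q^j : F) ≠ 0 := pow_ne_zero _ hq0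
  field_simp
  ring

lemma S_closed (hq0 : q ≠ 0) (hq : ∀ m : ℕ, 0 < m → q ^ m ≠ 1) (n k : ℕ) (m : ℤ) :
    S q n k m = (-1:F)^n * q^((n:ℤ)*((k:ℤ)+1-m) + (n.choose 2:ℤ)) * qBinomZ q (k+1) (m+1-(n:ℤ)) := by
  induction n generalizing m with
  | zero =>
    rw [S, Finset.sum_range_one]
    norm_num
    rw [qBinom_zero hq]
    ring
  | succ n ih =>
    rw [S_succ hq0 hq, ih (m-1),
        show m - 1 + 1 - (n:ℤ) = m + 1 - ((n+1:ℕ):ℤ) from by push_cast; ring]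
    rw [show -q^((k:ℤ)+1-m) * ((-1:F)^n * q^((n:ℤ)*((k:ℤ)+1-(m-1)) + (n.choose 2:ℤ)) *
          qBinomZ q (k+1) (m+1-((n+1:ℕ):ℤ)))
        = (-1:F)^(n+1) * (q^((k:ℤ)+1-m) * q^((n:ℤ)*((k:ℤ)+1-(m-1)) + (n.choose 2:ℤ))) *
          qBinomZ q (k+1) (m+1-((n+1:ℕ):ℤ)) from by ring,
        ← zpow_add₀ hq0,
        show (k:ℤ)+1-m + ((n:ℤ)*((k:ℤ)+1-(m-1)) + (n.choose 2:ℤ))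
            = ((n+1:ℕ):ℤ)*((k:ℤ)+1-m) + (((n+1:ℕ)).choose 2:ℤ) from by
          rw [choose_two_succ]; push_cast; ring]

lemma two_mul_choose_two (n : ℕ) : ((n.choose 2 : ℤ)) * 2 = (n:ℤ) * ((n:ℤ)-1) := by
  induction n with
  | zero => simp
  | succ n ih =>
    rw [Nat.choose_succ_succ, Nat.choose_one_right]
    push_cast
    push_cast at ih
    linear_combination ih

end Aux

theorem stmt2 {F : Type*} [Field F] (q : F) (hq0 : q ≠ 0)
    (hq : ∀ m : ℕ, 0 < m → q ^ m ≠ 1) (a : ℕ → F) (k l : ℕ) :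
    ∑ j ∈ Finset.range (l + 2), qBinom q (l + 1) j * (-1 : F) ^ (j + 1) *
        qInt q (k + j + 1) * qDual q a (k + j) *
        q ^ ((j.choose 2 : ℤ) - (l : ℤ) * ((k : ℤ) + j) - (k : ℤ)) =
    ∑ j ∈ Finset.range (k + 2), qBinom q (k + 1) j * (-1 : F) ^ j *
        qInt q (l + j + 1) * a (l + j) *
        q ^ ((((j : ℤ) - 1) * ((j : ℤ) - 2)) / 2) := by
  calc
    ∑ j ∈ Finset.range (l + 2), qBinom q (l + 1) j * (-1 : F) ^ (j + 1) *
        qInt q (k + j + 1) * qDual q a (k + j) *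
        q ^ ((j.choose 2 : ℤ) - (l : ℤ) * ((k : ℤ) + j) - (k : ℤ))
      = ∑ j ∈ Finset.range (l + 2), ∑ i ∈ Finset.range (k + l + 2),
          qBinom q (l + 1) j * (-1 : F) ^ (j + 1) * qInt q (k + j + 1) *
            ((-1:F)^i * qBinom q (k+j) i * q^(i.choose 2) * a i) *
            q ^ ((j.choose 2 : ℤ) - (l : ℤ) * ((k : ℤ) + j) - (k : ℤ)) := by
        refine Finset.sum_congr rfl fun j hj => ?_
        have hsub : Finset.range (k+j+1) ⊆ Finset.range (k+l+2) :=
          Finset.range_subset_range.2 (by simp only [Finset.mem_range] at hj; omega)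
        rw [qDual, Finset.sum_subset hsub
            (fun i _ hi => by
              rw [qBinom_of_lt (by simp only [Finset.mem_range] at hi ⊢; omega)]; ring),
          Finset.mul_sum, Finset.sum_mul]
    _ = ∑ i ∈ Finset.range (k + l + 2), ∑ j ∈ Finset.range (l + 2),
          qBinom q (l + 1) j * (-1 : F) ^ (j + 1) * qInt q (k + j + 1) *
            ((-1:F)^i * qBinom q (k+j) i * q^(i.choose 2) * a i) *
            q ^ ((j.choose 2 : ℤ) - (l : ℤ) * ((k : ℤ) + j) - (k : ℤ)) := Finset.sum_comm
    _ = ∑ i ∈ Finset.range (k + l + 2),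
          (-1:F)^(i+1) * qInt q (i+1) * a i * q^((i.choose 2:ℤ) - (k:ℤ)*((l:ℤ)+1)) *
            S q (l+1) k (i:ℤ) := by
        refine Finset.sum_congr rfl fun i _ => ?_
        rw [S, Finset.mul_sum]
        refine Finset.sum_congr rfl fun j hj => ?_
        have hL2 : qBinom q (k+j) i
            = qInt q (i+1) * qBinom q (k+j+1) (i+1) / qInt q (k+j+1) := by
          rw [eq_div_iff (qInt_ne_zero hq (by omega))]
          linear_combination qIntBinom hq (k+j) i
        rw [show ((i:ℤ)+1) = ((i+1:ℕ):ℤ) from by push_cast; ring, qBinomZ_coe,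
            show ((((l+1:ℕ)):ℤ)-1)*(j:ℤ) = (l:ℤ)*(j:ℤ) from by push_cast; ring,
            show (l:ℤ)*((k:ℤ)+(j:ℤ)) = (l:ℤ)*(k:ℤ) + (l:ℤ)*(j:ℤ) from by ring,
            hL2]
        have hI : qInt q (k+j+1) ≠ 0 := qInt_ne_zero hq (by omega)
        have h1 : (q^l : F) ≠ 0 := pow_ne_zero _ hq0
        have h2 : ((q^l)^k : F) ≠ 0 := pow_ne_zero _ h1
        have h3 : ((q^l)^j : F) ≠ 0 := pow_ne_zero _ h1
        have h4 : (q^k : F) ≠ 0 := pow_ne_zero _ hq0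
        simp only [mul_add, add_mul, mul_sub, sub_mul, mul_one, one_mul, zpow_sub₀ hq0,
          zpow_add₀ hq0, zpow_mul, zpow_natCast, zpow_one, mul_zpow, div_zpow, zpow_zero]
        field_simp
        ring
    _ = ∑ i ∈ Finset.range (k + l + 2),
          (-1:F)^(i+1) * qInt q (i+1) * a i * q^((i.choose 2:ℤ) - (k:ℤ)*((l:ℤ)+1)) *
            ((-1:F)^(l+1) * q^((((l+1:ℕ)):ℤ)*((k:ℤ)+1-(i:ℤ)) + (((l+1).choose 2):ℤ)) *
              qBinomZ q (k+1) ((i:ℤ)+1-((l+1:ℕ):ℤ))) := by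
        refine Finset.sum_congr rfl fun i _ => ?_
        rw [S_closed hq0 hq]
    _ = ∑ j ∈ Finset.range (k + 2), qBinom q (k + 1) j * (-1 : F) ^ j *
        qInt q (l + j + 1) * a (l + j) *
        q ^ ((((j : ℤ) - 1) * ((j : ℤ) - 2)) / 2) := by
        rw [show k+l+2 = l+(k+2) from by omega, Finset.sum_range_add]
        rw [Finset.sum_eq_zero (fun i hi => by
          rw [qBinomZ_neg (show (i:ℤ)+1-((l+1:ℕ):ℤ) < 0 from by
            simp only [Finset.mem_range] at hi; push_cast; omega)]
          ring), zero_add]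
        refine Finset.sum_congr rfl fun j hj => ?_
        rw [show ((l+j:ℕ):ℤ)+1-((l+1:ℕ):ℤ) = ((j:ℕ):ℤ) from by push_cast; ring, qBinomZ_coe]
        have hs : ((-1):F)^(l+j+1) * (-1)^(l+1) = (-1)^j := by
          rw [← pow_add, show l+j+1+(l+1) = j+2*(l+1) from by ring, pow_add, pow_mul]
          norm_num
        have hexp : ((((j:ℤ)-1)*((j:ℤ)-2))/2)
            = (((l+j).choose 2:ℤ) - (k:ℤ)*((l:ℤ)+1))
              + ((((l+1:ℕ)):ℤ)*((k:ℤ)+1-((l+j:ℕ):ℤ)) + (((l+1).choose 2):ℤ)) := by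
          have c1 := two_mul_choose_two (l+j)
          have c2 := two_mul_choose_two (l+1)
          have h2 : ((j:ℤ)-1)*((j:ℤ)-2)
              = 2 * ((((l+j).choose 2:ℤ) - (k:ℤ)*((l:ℤ)+1))
                + ((((l+1:ℕ)):ℤ)*((k:ℤ)+1-((l+j:ℕ):ℤ)) + (((l+1).choose 2):ℤ))) := by
            push_cast at c1 c2 ⊢
            linear_combination -c1 - c2
          rw [h2, Int.mul_ediv_cancel_left _ two_ne_zero]
        rw [hexp, zpow_add₀ hq0 ((((l+j).choose 2:ℤ) - (k:ℤ)*((l:ℤ)+1)))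
          (((((l+1:ℕ)):ℤ)*((k:ℤ)+1-((l+j:ℕ):ℤ)) + (((l+1).choose 2):ℤ)))]
        linear_combination (qInt q (l+j+1) * a (l+j) * q^((((l+j).choose 2:ℤ) - (k:ℤ)*((l:ℤ)+1)))
          * q^(((((l+1:ℕ)):ℤ)*((k:ℤ)+1-((l+j:ℕ):ℤ)) + (((l+1).choose 2):ℤ)))
          * qBinom q (k+1) j) * hs
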